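/- Let A be a Hopf algebra over a field k and σ : A ⊗ A → k a 2-cocycle with convolution inverse σ̄. Define the algebra A_σ̄ (product a ·_σ̄ b = σ̄(a_(2), b_(2)) a_(1) b_(1)) and the algebra _σA (product a ·_σ b = σ(a_(1), b_(1)) a_(2) b_(2)). Then the linear map φ : _σA → A_σ̄ given by φ(a) = σ(a_(1), S(a_(2))) S(a_(3)) satisfies m_{A_σ̄} ∘ (1 ⊗ φ) ∘ Δ = u ∘ ε, i.e. a_(1) ·_σ̄ φ(a_(2)) = ε(a)1 for all a ∈ A. -/

import Mathlib

open TensorProduct Coalgebra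

noncomputable section ConvAux

variable {k : Type*} [CommRing k]

section Conv
variable {C : Type*} [AddCommMonoid C] [Module k C] [Coalgebra k C]
variable {B : Type*} [Ring B] [Algebra k B]

/-- Convolution product of linear maps from a coalgebra to an algebra. -/
def conv (f g : C →ₗ[k] B) : C →ₗ[k] B :=
  LinearMap.mul' k B ∘ₗ TensorProduct.map f g ∘ₗ Coalgebra.comul

lemma conv_repr (f g : C →ₗ[k] B) {a : C} (r : Coalgebra.Repr k a (C × C)) :
    conv f g a = ∑ i ∈ r.index, f (r.left i) * g (r.right i) := by
  simp only [conv, LinearMap.comp_apply, ← r.eq, map_sum, TensorProduct.map_tmul,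
    LinearMap.mul'_apply]

/-- The convolution unit. -/
def convOne : C →ₗ[k] B := Algebra.linearMap k B ∘ₗ Coalgebra.counit

lemma convOne_apply (a : C) :
    (convOne : C →ₗ[k] B) a = Coalgebra.counit (R := k) a • (1 : B) := by
  simp [convOne, Algebra.algebraMap_eq_smul_one]

lemma counit_smul_left {a : C} (r : Coalgebra.Repr k a (C × C)) :
    ∑ i ∈ r.index, Coalgebra.counit (R := k) (r.left i) • r.right i = a := by
  have key : (TensorProduct.lid k C)
      ((LinearMap.rTensor C (Coalgebra.counit (R := k))) (Coalgebra.comul a)) = a := by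
    rw [Coalgebra.rTensor_counit_comul]; simp
  refine Eq.trans ?_ key
  rw [← r.eq]
  simp only [map_sum, LinearMap.rTensor_tmul, TensorProduct.lid_tmul]

lemma counit_smul_right {a : C} (r : Coalgebra.Repr k a (C × C)) :
    ∑ i ∈ r.index, Coalgebra.counit (R := k) (r.right i) • r.left i = a := by
  have key : (TensorProduct.rid k C)
      ((LinearMap.lTensor C (Coalgebra.counit (R := k))) (Coalgebra.comul a)) = a := by
    rw [Coalgebra.lTensor_counit_comul]; simp
  refine Eq.trans ?_ key
  rw [← r.eq]
  simp only [map_sum, LinearMap.lTensor_tmul, TensorProduct.rid_tmul]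

lemma conv_one_left (f : C →ₗ[k] B) : conv convOne f = f := by
  refine LinearMap.ext fun a => ?_
  have r := Coalgebra.Repr.arbitrary k a
  rw [conv_repr _ _ r]
  calc ∑ i ∈ r.index, (convOne : C →ₗ[k] B) (r.left i) * f (r.right i)
      = ∑ i ∈ r.index, f (Coalgebra.counit (R := k) (r.left i) • r.right i) := by
        refine Finset.sum_congr rfl fun i _ => ?_
        rw [convOne_apply, map_smul, smul_mul_assoc, one_mul]
    _ = f a := by rw [← map_sum, counit_smul_left r]

lemma conv_one_right (f : C →ₗ[k] B) : conv f convOne = f := by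
  refine LinearMap.ext fun a => ?_
  have r := Coalgebra.Repr.arbitrary k a
  rw [conv_repr _ _ r]
  calc ∑ i ∈ r.index, f (r.left i) * (convOne : C →ₗ[k] B) (r.right i)
      = ∑ i ∈ r.index, f (Coalgebra.counit (R := k) (r.right i) • r.left i) := by
        refine Finset.sum_congr rfl fun i _ => ?_
        rw [convOne_apply, map_smul, mul_smul_comm, mul_one]
    _ = f a := by rw [← map_sum, counit_smul_right r]

lemma conv_assoc (f g h : C →ₗ[k] B) : conv (conv f g) h = conv f (conv g h) := by
  refine LinearMap.ext fun a => ?_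
  have r := Coalgebra.Repr.arbitrary k a
  have r₁ : ∀ i, Coalgebra.Repr k (r.left i) (C × C) := fun i => Coalgebra.Repr.arbitrary k _
  have r₂ : ∀ i, Coalgebra.Repr k (r.right i) (C × C) := fun i => Coalgebra.Repr.arbitrary k _
  have key := Coalgebra.sum_map_tmul_tmul_eq (R := k) f g h a (repr := r) (a₁ := r₁) (a₂ := r₂)
  have key2 := congrArg (LinearMap.mul' k B ∘ₗ TensorProduct.map LinearMap.id (LinearMap.mul' k B)) key
  simp only [map_sum, LinearMap.comp_apply, TensorProduct.map_tmul, LinearMap.mul'_apply,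
    LinearMap.id_apply] at key2
  rw [conv_repr _ _ r, conv_repr _ _ r]
  calc ∑ i ∈ r.index, conv f g (r.left i) * h (r.right i)
      = ∑ i ∈ r.index, ∑ j ∈ (r₁ i).index,
          f ((r₁ i).left j) * (g ((r₁ i).right j) * h (r.right i)) := by
        refine Finset.sum_congr rfl fun i _ => ?_
        rw [conv_repr _ _ (r₁ i), Finset.sum_mul]
        exact Finset.sum_congr rfl fun j _ => mul_assoc _ _ _
    _ = ∑ i ∈ r.index, ∑ j ∈ (r₂ i).index,
          f (r.left i) * (g ((r₂ i).left j) * h ((r₂ i).right j)) := key2.symm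
    _ = ∑ i ∈ r.index, f (r.left i) * conv g h (r.right i) := by
        refine Finset.sum_congr rfl fun i _ => ?_
        rw [conv_repr _ _ (r₂ i), Finset.mul_sum]

end Conv
end ConvAux

section HopfAux
variable {k : Type*} [CommRing k] {A : Type*} [Ring A] [HopfAlgebra k A]

local notation "S" => (HopfAlgebra.antipode (R := k) (A := A))

lemma counit_antipode (a : A) :
    Coalgebra.counit (R := k) (S a) = Coalgebra.counit (R := k) a := by
  have r := Coalgebra.Repr.arbitrary k a
  have h1 := HopfAlgebra.sum_mul_antipode_eq_algebraMap_counit (R := k) r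
  have h2 := congrArg (Bialgebra.counitAlgHom k A) h1
  simp only [map_sum, map_mul, Bialgebra.counitAlgHom_apply, AlgHom.commutes,
    Algebra.algebraMap_self, RingHom.id_apply] at h2
  have h3 := congrArg S (counit_smul_left r).symm
  rw [map_sum] at h3
  rw [h3, map_sum]
  simp only [map_smul]
  calc ∑ i ∈ r.index, Coalgebra.counit (R := k) (r.left i) •
          Coalgebra.counit (R := k) (S (r.right i))
      = ∑ i ∈ r.index, Coalgebra.counit (R := k) (r.left i) *
          Coalgebra.counit (R := k) (S (r.right i)) := by
        refine Finset.sum_congr rfl fun i _ => rfl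
    _ = Coalgebra.counit (R := k) a := h2

end HopfAux

noncomputable section HopfAux2
variable {k : Type*} [CommRing k] {A : Type*} [Ring A] [HopfAlgebra k A]

local notation "S" => (HopfAlgebra.antipode (R := k) (A := A))

/-- Rotation of a nested Sweedler expansion, with a linear map on the last leg. -/
lemma rot {M : Type*} [AddCommMonoid M] [Module k M] {a : A} (f : A →ₗ[k] M)
    (r : Coalgebra.Repr k a (A × A)) (u : ∀ i, Coalgebra.Repr k (r.left i) (A × A))
    (s : ∀ i, Coalgebra.Repr k (r.right i) (A × A)) :
    ∑ i ∈ r.index, ∑ p ∈ (u i).index,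
      (u i).left p ⊗ₜ[k] ((u i).right p ⊗ₜ[k] f (r.right i))
    = ∑ i ∈ r.index, ∑ j ∈ (s i).index,
      r.left i ⊗ₜ[k] ((s i).left j ⊗ₜ[k] f ((s i).right j)) := by
  have h := Coalgebra.sum_tmul_tmul_eq (R := k) r u s
  have h2 := congrArg (TensorProduct.map (LinearMap.id)
    (TensorProduct.map (LinearMap.id) f)) h
  simpa only [map_sum, TensorProduct.map_tmul, LinearMap.id_apply] using h2

/-- The weight map used in the proof of `comul_antipode`. -/
def theta : A ⊗[k] (A ⊗[k] (A ⊗[k] A)) →ₗ[k] A ⊗[k] A :=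
  TensorProduct.map (LinearMap.mul' k A) (LinearMap.mul' k A)
    ∘ₗ (TensorProduct.tensorTensorTensorComm k A A A A).toLinearMap
    ∘ₗ TensorProduct.map LinearMap.id (TensorProduct.comm k A A).toLinearMap
    ∘ₗ (TensorProduct.assoc k A A (A ⊗[k] A)).symm.toLinearMap
    ∘ₗ TensorProduct.map LinearMap.id
        (TensorProduct.map LinearMap.id (TensorProduct.map S S))

lemma theta_tmul (w x y z : A) :
    (theta (k := k)) (w ⊗ₜ[k] (x ⊗ₜ[k] (y ⊗ₜ[k] z)))
      = (w * S z) ⊗ₜ[k] (x * S y) := by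
  simp [theta]

lemma conv_comul_G :
    conv (Coalgebra.comul (R := k) (A := A))
      ((TensorProduct.comm k A A).toLinearMap ∘ₗ TensorProduct.map S S
        ∘ₗ Coalgebra.comul) = convOne := by
  refine LinearMap.ext fun a => ?_
  have r := Coalgebra.Repr.arbitrary k a
  have u : ∀ i, Coalgebra.Repr k (r.left i) (A × A) := fun i => Coalgebra.Repr.arbitrary k _
  have s : ∀ i, Coalgebra.Repr k (r.right i) (A × A) := fun i => Coalgebra.Repr.arbitrary k _
  have t : ∀ i j, Coalgebra.Repr k ((s i).left j) (A × A) := fun i j => Coalgebra.Repr.arbitrary k _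
  have v : ∀ i j, Coalgebra.Repr k ((s i).right j) (A × A) := fun i j => Coalgebra.Repr.arbitrary k _
  rw [conv_repr _ _ r]
  -- step 1 : pointwise product expansion
  have step1 : ∀ i ∈ r.index,
      (Coalgebra.comul (R := k) (r.left i)) *
        (((TensorProduct.comm k A A).toLinearMap ∘ₗ TensorProduct.map S S
          ∘ₗ Coalgebra.comul) (r.right i))
      = ∑ p ∈ (u i).index, ∑ j ∈ (s i).index,
          ((u i).left p * S ((s i).right j)) ⊗ₜ[k] ((u i).right p * S ((s i).left j)) := by
    intro i _
    simp only [LinearMap.comp_apply]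
    rw [← (u i).eq, ← (s i).eq]
    simp only [map_sum, TensorProduct.map_tmul, TensorProduct.comm_tmul, LinearEquiv.coe_coe]
    rw [Finset.sum_mul_sum]
    simp [Algebra.TensorProduct.tmul_mul_tmul]
  rw [Finset.sum_congr rfl step1]
  -- step 2 : rewrite as theta applied to a nested expansion
  have step2 : ∀ i ∈ r.index, ∀ p ∈ (u i).index, ∀ j ∈ (s i).index,
      ((u i).left p * S ((s i).right j)) ⊗ₜ[k] ((u i).right p * S ((s i).left j))
      = theta ((u i).left p ⊗ₜ[k] ((u i).right p ⊗ₜ[k] ((s i).left j ⊗ₜ[k] (s i).right j))) := by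
    intro i _ p _ j _; rw [theta_tmul]
  calc ∑ i ∈ r.index, ∑ p ∈ (u i).index, ∑ j ∈ (s i).index,
        ((u i).left p * S ((s i).right j)) ⊗ₜ[k] ((u i).right p * S ((s i).left j))
      = theta (∑ i ∈ r.index, ∑ p ∈ (u i).index,
          (u i).left p ⊗ₜ[k] ((u i).right p ⊗ₜ[k] (Coalgebra.comul (R := k) (r.right i)))) := by
        rw [map_sum]
        refine Finset.sum_congr rfl fun i hi => ?_
        rw [map_sum]
        refine Finset.sum_congr rfl fun p hp => ?_
        rw [← (s i).eq]
        simp only [tmul_sum, map_sum]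
        exact Finset.sum_congr rfl fun j hj => step2 i hi p hp j hj
    _ = theta (∑ i ∈ r.index, ∑ j ∈ (s i).index,
          r.left i ⊗ₜ[k] ((s i).left j ⊗ₜ[k] (Coalgebra.comul (R := k) ((s i).right j)))) := by
        rw [rot (Coalgebra.comul (R := k)) r u s]
    _ = theta (∑ i ∈ r.index, ∑ j ∈ (s i).index, ∑ m ∈ (t i j).index,
          r.left i ⊗ₜ[k] ((t i j).left m ⊗ₜ[k] ((t i j).right m ⊗ₜ[k] (s i).right j))) := by
        congr 1
        refine Finset.sum_congr rfl fun i _ => ?_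
        have inner := Coalgebra.sum_tmul_tmul_eq (R := k) (s i) (t i) (v i)
        have inner2 := congrArg (fun z => r.left i ⊗ₜ[k] z) inner
        simp only [tmul_sum] at inner2
        calc ∑ j ∈ (s i).index,
              r.left i ⊗ₜ[k] ((s i).left j ⊗ₜ[k] (Coalgebra.comul (R := k) ((s i).right j)))
            = ∑ j ∈ (s i).index, ∑ n ∈ (v i j).index,
              r.left i ⊗ₜ[k] ((s i).left j ⊗ₜ[k] ((v i j).left n ⊗ₜ[k] (v i j).right n)) := by
              refine Finset.sum_congr rfl fun j _ => ?_
              rw [← (v i j).eq]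
              simp only [tmul_sum]
          _ = ∑ j ∈ (s i).index, ∑ m ∈ (t i j).index,
              r.left i ⊗ₜ[k] ((t i j).left m ⊗ₜ[k] ((t i j).right m ⊗ₜ[k] (s i).right j)) :=
              inner2.symm
    _ = ∑ i ∈ r.index, ∑ j ∈ (s i).index, ∑ m ∈ (t i j).index,
          ((r.left i * S ((s i).right j)) ⊗ₜ[k] ((t i j).left m * S ((t i j).right m))) := by
        simp only [map_sum, theta_tmul]
    _ = ∑ i ∈ r.index, ∑ j ∈ (s i).index,
          (Coalgebra.counit (R := k) ((s i).left j)) •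
            ((r.left i * S ((s i).right j)) ⊗ₜ[k] (1 : A)) := by
        refine Finset.sum_congr rfl fun i _ => Finset.sum_congr rfl fun j _ => ?_
        rw [← tmul_sum, HopfAlgebra.sum_mul_antipode_eq_smul (t i j), tmul_smul]
    _ = ∑ i ∈ r.index, (r.left i * S (r.right i)) ⊗ₜ[k] (1 : A) := by
        refine Finset.sum_congr rfl fun i _ => ?_
        have key := congrArg (fun z => (r.left i * S z) ⊗ₜ[k] (1 : A)) (counit_smul_left (s i))
        refine Eq.trans ?_ key
        rw [map_sum, Finset.mul_sum, TensorProduct.sum_tmul]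
        refine Finset.sum_congr rfl fun j _ => ?_
        rw [map_smul, mul_smul_comm, smul_tmul']
    _ = convOne a := by
        rw [← TensorProduct.sum_tmul, HopfAlgebra.sum_mul_antipode_eq_smul r]
        simp [convOne_apply, Algebra.TensorProduct.one_def, smul_tmul']

lemma conv_F_comul :
    conv (Coalgebra.comul (R := k) (A := A) ∘ₗ S) (Coalgebra.comul (R := k) (A := A))
      = convOne := by
  refine LinearMap.ext fun a => ?_
  have r := Coalgebra.Repr.arbitrary k a
  rw [conv_repr _ _ r]
  calc ∑ i ∈ r.index,
        (Coalgebra.comul (R := k) (A := A) ∘ₗ S) (r.left i) * Coalgebra.comul (r.right i)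
      = ∑ i ∈ r.index, (Bialgebra.comulAlgHom k A) (S (r.left i) * r.right i) := by
        refine Finset.sum_congr rfl fun i _ => ?_
        rw [map_mul]
        rfl
    _ = (Bialgebra.comulAlgHom k A) (∑ i ∈ r.index, S (r.left i) * r.right i) := by
        rw [map_sum]
    _ = convOne a := by
        rw [HopfAlgebra.sum_antipode_mul_eq_algebraMap_counit r, AlgHom.commutes, convOne_apply,
          Algebra.algebraMap_eq_smul_one]

lemma comul_antipode :
    Coalgebra.comul (R := k) (A := A) ∘ₗ S
      = (TensorProduct.comm k A A).toLinearMap ∘ₗ TensorProduct.map S S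
          ∘ₗ Coalgebra.comul := by
  calc Coalgebra.comul (R := k) (A := A) ∘ₗ S
      = conv (Coalgebra.comul (R := k) (A := A) ∘ₗ S) convOne := (conv_one_right _).symm
    _ = conv (Coalgebra.comul (R := k) (A := A) ∘ₗ S)
        (conv (Coalgebra.comul (R := k) (A := A))
          ((TensorProduct.comm k A A).toLinearMap ∘ₗ TensorProduct.map S S
            ∘ₗ Coalgebra.comul)) := by rw [conv_comul_G]
    _ = conv (conv (Coalgebra.comul (R := k) (A := A) ∘ₗ S)
          (Coalgebra.comul (R := k) (A := A)))
        ((TensorProduct.comm k A A).toLinearMap ∘ₗ TensorProduct.map S S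
          ∘ₗ Coalgebra.comul) := (conv_assoc _ _ _).symm
    _ = conv convOne ((TensorProduct.comm k A A).toLinearMap ∘ₗ TensorProduct.map S S
          ∘ₗ Coalgebra.comul) := by rw [conv_F_comul]
    _ = (TensorProduct.comm k A A).toLinearMap ∘ₗ TensorProduct.map S S
          ∘ₗ Coalgebra.comul := conv_one_left _

lemma comul_antipode_apply (a : A) :
    Coalgebra.comul (R := k) (S a)
      = (TensorProduct.comm k A A) (TensorProduct.map S S (Coalgebra.comul (R := k) a)) :=
  congrArg (fun f => f a) (comul_antipode (k := k) (A := A))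

lemma comul_antipode_repr {a : A} (r : Coalgebra.Repr k a (A × A)) :
    Coalgebra.comul (R := k) (S a)
      = ∑ i ∈ r.index, S (r.right i) ⊗ₜ[k] S (r.left i) := by
  rw [comul_antipode_apply, ← r.eq]
  simp [map_sum]

end HopfAux2

noncomputable section MainAux
variable {k : Type*} [CommRing k] {A : Type*} [Ring A] [HopfAlgebra k A]

local notation "S" => (HopfAlgebra.antipode (R := k) (A := A))
local notation "Δ" => (Coalgebra.comul (R := k) (A := A))

/-- Canonical threefold comultiplication (right comb). -/
def Cm3 : A →ₗ[k] A ⊗[k] (A ⊗[k] A) :=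
  TensorProduct.map LinearMap.id Δ ∘ₗ Δ

/-- Canonical fourfold comultiplication (right comb). -/
def Cm4 : A →ₗ[k] A ⊗[k] (A ⊗[k] (A ⊗[k] A)) :=
  TensorProduct.map LinearMap.id Cm3 ∘ₗ Δ

/-- Canonical fivefold comultiplication (right comb). -/
def Cm5 : A →ₗ[k] A ⊗[k] (A ⊗[k] (A ⊗[k] (A ⊗[k] A))) :=
  TensorProduct.map LinearMap.id Cm4 ∘ₗ Δ

/-- Canonical sixfold comultiplication (right comb). -/
def Cm6 : A →ₗ[k] A ⊗[k] (A ⊗[k] (A ⊗[k] (A ⊗[k] (A ⊗[k] A)))) :=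
  TensorProduct.map LinearMap.id Cm5 ∘ₗ Δ

set_option synthInstance.maxHeartbeats 1000000

lemma coassoc_pt (b : A) :
    (TensorProduct.assoc k A A A) (TensorProduct.map Δ LinearMap.id (Δ b)) = Cm3 b := by
  have h := Coalgebra.coassoc (R := k) (A := A)
  have h2 := congrArg (fun f => f b) h
  simpa [Cm3, LinearMap.rTensor, LinearMap.lTensor] using h2

/-- `assoc ∘ (Δ ⊗ Δ) ∘ Δ` is the canonical fourfold comultiplication. -/
lemma G4_pt (b : A) :
    (TensorProduct.assoc k A A (A ⊗[k] A)) (TensorProduct.map Δ Δ (Δ b)) = Cm4 b := by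
  have hmap : (TensorProduct.map Δ Δ : A ⊗[k] A →ₗ[k] _)
      = TensorProduct.map LinearMap.id Δ ∘ₗ TensorProduct.map Δ LinearMap.id := by
    rw [← TensorProduct.map_comp, LinearMap.id_comp, LinearMap.comp_id]
  have hnat : ∀ z : (A ⊗[k] A) ⊗[k] A,
      (TensorProduct.assoc k A A (A ⊗[k] A)) (TensorProduct.map LinearMap.id Δ z)
      = TensorProduct.map LinearMap.id (TensorProduct.map LinearMap.id Δ)
          ((TensorProduct.assoc k A A A) z) := by
    intro z
    have : (TensorProduct.assoc k A A (A ⊗[k] A)).toLinearMap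
        ∘ₗ TensorProduct.map LinearMap.id Δ
        = TensorProduct.map LinearMap.id (TensorProduct.map LinearMap.id Δ)
          ∘ₗ (TensorProduct.assoc k A A A).toLinearMap := by
      apply TensorProduct.ext_threefold
      intro x y z
      simp
    exact congrArg (fun f => f z) this
  rw [hmap]
  have : TensorProduct.map LinearMap.id Δ (TensorProduct.map Δ LinearMap.id (Δ b))
      = (TensorProduct.map LinearMap.id Δ ∘ₗ TensorProduct.map Δ LinearMap.id) (Δ b) := rfl
  rw [LinearMap.comp_apply, hnat, coassoc_pt]
  -- now : map id (map id Δ) (Cm3 b) = Cm4 b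
  simp only [Cm3, Cm4, LinearMap.comp_apply]
  rw [← LinearMap.comp_apply (TensorProduct.map _ _), ← TensorProduct.map_comp]
  rfl

/-- Left-nested threefold expansion with last leg processed by `f` equals comb. -/
lemma threeL {c : A}
    (w : Coalgebra.Repr k c (A × A)) (q : ∀ l, Coalgebra.Repr k (w.left l) (A × A)) :
    ∑ l ∈ w.index, ∑ n ∈ (q l).index,
      (q l).left n ⊗ₜ[k] ((q l).right n ⊗ₜ[k] w.right l) = Cm3 c := by
  rw [Coalgebra.sum_tmul_tmul_eq (R := k) w q (fun l => Coalgebra.Repr.arbitrary k _)]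
  simp only [Cm3, LinearMap.comp_apply]
  rw [← w.eq]
  simp only [map_sum, TensorProduct.map_tmul, LinearMap.id_apply]
  refine Finset.sum_congr rfl fun l _ => ?_
  rw [← (Coalgebra.Repr.arbitrary k (w.right l)).eq]
  simp [tmul_sum]


/-- Fourfold expansion of pattern ((3,4),(5,6)) equals the comb `Cm4`. -/
lemma fourK {b : A} (w : Coalgebra.Repr k b (A × A))
    (t : ∀ j, Coalgebra.Repr k (w.left j) (A × A)) (v : ∀ j, Coalgebra.Repr k (w.right j) (A × A)) :
    ∑ j ∈ w.index, ∑ m ∈ (t j).index, ∑ n ∈ (v j).index,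
      (t j).left m ⊗ₜ[k] ((t j).right m ⊗ₜ[k] ((v j).left n ⊗ₜ[k] (v j).right n))
    = Cm4 b := by
  rw [← G4_pt]
  rw [← w.eq]
  simp only [map_sum, TensorProduct.map_tmul]
  refine Finset.sum_congr rfl fun j _ => ?_
  rw [← (t j).eq, ← (v j).eq]
  simp only [map_sum, TensorProduct.sum_tmul, TensorProduct.tmul_sum, TensorProduct.assoc_tmul]
  rw [Finset.sum_comm]

/-- The pattern `((1,2),((3,4),(5,6)))` expansion equals the canonical comb. -/
lemma P1_eq {a : A} (r : Coalgebra.Repr k a (A × A))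
    (u : ∀ i, Coalgebra.Repr k (r.left i) (A × A))
    (w : ∀ i, Coalgebra.Repr k (r.right i) (A × A))
    (t : ∀ i j, Coalgebra.Repr k ((w i).left j) (A × A))
    (v : ∀ i j, Coalgebra.Repr k ((w i).right j) (A × A)) :
    ∑ i ∈ r.index, ∑ p ∈ (u i).index, ∑ j ∈ (w i).index,
      ∑ m ∈ (t i j).index, ∑ n ∈ (v i j).index,
      (u i).left p ⊗ₜ[k] ((u i).right p ⊗ₜ[k]
        ((t i j).left m ⊗ₜ[k] ((t i j).right m ⊗ₜ[k]
          ((v i j).left n ⊗ₜ[k] (v i j).right n))))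
    = Cm6 a := by
  have step1 : ∀ i ∈ r.index, ∀ p ∈ (u i).index,
      ∑ j ∈ (w i).index, ∑ m ∈ (t i j).index, ∑ n ∈ (v i j).index,
        (u i).left p ⊗ₜ[k] ((u i).right p ⊗ₜ[k]
          ((t i j).left m ⊗ₜ[k] ((t i j).right m ⊗ₜ[k]
            ((v i j).left n ⊗ₜ[k] (v i j).right n))))
      = (u i).left p ⊗ₜ[k] ((u i).right p ⊗ₜ[k] Cm4 (r.right i)) := by
    intro i _ p _
    rw [← fourK (w i) (t i) (v i)]
    simp only [TensorProduct.tmul_sum]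
  rw [Finset.sum_congr rfl (fun i hi => Finset.sum_congr rfl (step1 i hi))]
  rw [rot Cm4 r u (fun i => Coalgebra.Repr.arbitrary k _)]
  -- now collapse to Cm6
  simp only [Cm6, LinearMap.comp_apply]
  rw [← r.eq]
  simp only [map_sum, TensorProduct.map_tmul, LinearMap.id_apply]
  refine Finset.sum_congr rfl fun i _ => ?_
  simp only [Cm5, LinearMap.comp_apply]
  rw [← (Coalgebra.Repr.arbitrary k (r.right i)).eq]
  simp only [map_sum, TensorProduct.map_tmul, LinearMap.id_apply, TensorProduct.tmul_sum]

/-- The pattern `(1,((2,3),((4,5),6)))` expansion equals the canonical comb. -/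
lemma P2_eq {a : A} (r : Coalgebra.Repr k a (A × A))
    (s : ∀ i, Coalgebra.Repr k (r.right i) (A × A))
    (p : ∀ i j, Coalgebra.Repr k ((s i).left j) (A × A))
    (w : ∀ i j, Coalgebra.Repr k ((s i).right j) (A × A))
    (q : ∀ i j l, Coalgebra.Repr k ((w i j).left l) (A × A)) :
    ∑ i ∈ r.index, ∑ j ∈ (s i).index, ∑ m ∈ (p i j).index,
      ∑ l ∈ (w i j).index, ∑ n ∈ (q i j l).index,
      r.left i ⊗ₜ[k] ((p i j).left m ⊗ₜ[k] ((p i j).right m ⊗ₜ[k]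
        ((q i j l).left n ⊗ₜ[k] ((q i j l).right n ⊗ₜ[k] (w i j).right l))))
    = Cm6 a := by
  have step1 : ∀ i ∈ r.index, ∀ j ∈ (s i).index, ∀ m ∈ (p i j).index,
      ∑ l ∈ (w i j).index, ∑ n ∈ (q i j l).index,
        r.left i ⊗ₜ[k] ((p i j).left m ⊗ₜ[k] ((p i j).right m ⊗ₜ[k]
          ((q i j l).left n ⊗ₜ[k] ((q i j l).right n ⊗ₜ[k] (w i j).right l))))
      = r.left i ⊗ₜ[k] ((p i j).left m ⊗ₜ[k] ((p i j).right m ⊗ₜ[k]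
          Cm3 ((s i).right j))) := by
    intro i _ j _ m _
    rw [← threeL (w i j) (q i j)]
    simp only [TensorProduct.tmul_sum]
  rw [Finset.sum_congr rfl (fun i hi => Finset.sum_congr rfl (fun j hj =>
    Finset.sum_congr rfl (step1 i hi j hj)))]
  -- now : ∑ i, ∑ j, ∑ m, rl i ⊗ (pl ⊗ (pr ⊗ Cm3 (sr j)))
  have step2 : ∀ i ∈ r.index,
      ∑ j ∈ (s i).index, ∑ m ∈ (p i j).index,
        r.left i ⊗ₜ[k] ((p i j).left m ⊗ₜ[k] ((p i j).right m ⊗ₜ[k]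
          Cm3 ((s i).right j)))
      = r.left i ⊗ₜ[k] Cm5 (r.right i) := by
    intro i _
    simp only [← TensorProduct.tmul_sum]
    congr 1
    rw [rot Cm3 (s i) (p i) (fun j => Coalgebra.Repr.arbitrary k _)]
    simp only [Cm5, LinearMap.comp_apply]
    rw [← (s i).eq]
    simp only [map_sum, TensorProduct.map_tmul, LinearMap.id_apply]
    refine Finset.sum_congr rfl fun j _ => ?_
    simp only [Cm4, LinearMap.comp_apply]
    rw [← (Coalgebra.Repr.arbitrary k ((s i).right j)).eq]
    simp only [map_sum, TensorProduct.map_tmul, LinearMap.id_apply, TensorProduct.tmul_sum]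
  rw [Finset.sum_congr rfl step2]
  simp only [Cm6, LinearMap.comp_apply]
  rw [← r.eq]
  simp only [map_sum, TensorProduct.map_tmul, LinearMap.id_apply]

variable (σ σb : A ⊗[k] A →ₗ[k] k)

/-- Contraction of legs 3,4 (with antipode on leg 4). -/
def c34 : A ⊗[k] (A ⊗[k] (A ⊗[k] A)) →ₗ[k] A ⊗[k] A :=
  (TensorProduct.lid k (A ⊗[k] A)).toLinearMap
    ∘ₗ TensorProduct.map (σ ∘ₗ TensorProduct.map LinearMap.id S) LinearMap.id
    ∘ₗ (TensorProduct.assoc k A A (A ⊗[k] A)).symm.toLinearMap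

lemma c34_tmul (x y z₁ z₂ : A) :
    c34 σ (x ⊗ₜ[k] (y ⊗ₜ[k] (z₁ ⊗ₜ[k] z₂)))
      = σ (x ⊗ₜ[k] S y) • (z₁ ⊗ₜ[k] z₂) := by
  simp [c34]

/-- Contraction of legs 2,5 (with antipode on leg 5). -/
def c25 : A ⊗[k] (A ⊗[k] A) →ₗ[k] A :=
  (TensorProduct.lid k A).toLinearMap
    ∘ₗ TensorProduct.map (σb ∘ₗ TensorProduct.map LinearMap.id S) LinearMap.id
    ∘ₗ (TensorProduct.assoc k A A A).symm.toLinearMap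

lemma c25_tmul (x y z : A) :
    c25 σb (x ⊗ₜ[k] (y ⊗ₜ[k] z)) = σb (x ⊗ₜ[k] S y) • z := by
  simp [c25]

/-- The weight map on the sixfold tensor power. -/
def theta6 : A ⊗[k] (A ⊗[k] (A ⊗[k] (A ⊗[k] (A ⊗[k] A)))) →ₗ[k] A :=
  LinearMap.mul' k A ∘ₗ TensorProduct.map LinearMap.id S
    ∘ₗ TensorProduct.map LinearMap.id (c25 σb)
    ∘ₗ TensorProduct.map LinearMap.id (TensorProduct.map LinearMap.id (c34 σ))

lemma theta6_tmul (a₁ a₂ a₃ a₄ a₅ a₆ : A) :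
    theta6 σ σb (a₁ ⊗ₜ[k] (a₂ ⊗ₜ[k] (a₃ ⊗ₜ[k] (a₄ ⊗ₜ[k] (a₅ ⊗ₜ[k] a₆)))))
      = (σ (a₃ ⊗ₜ[k] S a₄) * σb (a₂ ⊗ₜ[k] S a₅)) • (a₁ * S a₆) := by
  simp only [theta6, LinearMap.comp_apply, TensorProduct.map_tmul, LinearMap.id_apply,
    c34_tmul, TensorProduct.tmul_smul, map_smul, c25_tmul, LinearMap.mul'_apply,
    LinearMap.map_smul]
  rw [smul_smul, mul_comm]

/-- Pointwise formula for the twisted antipode `φ`. -/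
lemma phi_repr {b : A} (w : Coalgebra.Repr k b (A × A)) (t : ∀ j, Coalgebra.Repr k (w.left j) (A × A)) :
    ((TensorProduct.lid k A).toLinearMap ∘ₗ
      TensorProduct.map (σ ∘ₗ TensorProduct.map LinearMap.id S) S ∘ₗ
        TensorProduct.map Δ LinearMap.id ∘ₗ Δ) b
    = ∑ j ∈ w.index, ∑ m ∈ (t j).index,
        σ ((t j).left m ⊗ₜ[k] S ((t j).right m)) • S (w.right j) := by
  simp only [LinearMap.comp_apply]
  rw [← w.eq]
  simp only [map_sum, TensorProduct.map_tmul, LinearMap.id_apply]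
  refine Finset.sum_congr rfl fun j _ => ?_
  rw [← (t j).eq]
  simp only [TensorProduct.sum_tmul, map_sum, TensorProduct.map_tmul, LinearMap.comp_apply,
    LinearMap.id_apply, LinearEquiv.coe_coe, TensorProduct.lid_tmul]

/-- Pointwise formula for the twisted product against an antipode value. -/
lemma mulsb_repr (x q : A) (ux : Coalgebra.Repr k x (A × A)) (vq : Coalgebra.Repr k q (A × A)) :
    ((TensorProduct.rid k A).toLinearMap ∘ₗ
      TensorProduct.map (LinearMap.mul' k A) σb ∘ₗ
        (TensorProduct.tensorTensorTensorComm k A A A A).toLinearMap ∘ₗ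
          TensorProduct.map Δ Δ) (x ⊗ₜ[k] S q)
    = ∑ p ∈ ux.index, ∑ n ∈ vq.index,
        σb (ux.right p ⊗ₜ[k] S (vq.left n)) • (ux.left p * S (vq.right n)) := by
  simp only [LinearMap.comp_apply, TensorProduct.map_tmul]
  rw [comul_antipode_repr vq, ← ux.eq]
  simp only [TensorProduct.sum_tmul, TensorProduct.tmul_sum, map_sum, LinearEquiv.coe_coe,
    TensorProduct.tensorTensorTensorComm_tmul, TensorProduct.map_tmul,
    LinearMap.mul'_apply, TensorProduct.rid_tmul]
  rw [Finset.sum_comm]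

lemma collapse
    (hconv₂ : LinearMap.mul' k k ∘ₗ TensorProduct.map σb σ ∘ₗ
        (Coalgebra.comul (R := k) (A := A ⊗[k] A)) =
      (Coalgebra.counit (R := k) (A := A ⊗[k] A)))
    (x y : A) (rx : Coalgebra.Repr k x (A × A)) (ry : Coalgebra.Repr k y (A × A)) :
    ∑ m ∈ rx.index, ∑ n ∈ ry.index,
      σ (rx.right m ⊗ₜ[k] S (ry.left n)) * σb (rx.left m ⊗ₜ[k] S (ry.right n))
    = Coalgebra.counit (R := k) x * Coalgebra.counit (R := k) y := by
  have h := congrArg (fun f => f (x ⊗ₜ[k] (S y))) hconv₂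
  simp only [LinearMap.comp_apply, TensorProduct.comul_tmul,
    TensorProduct.counit_tmul] at h
  rw [comul_antipode_repr ry, ← rx.eq] at h
  simp only [TensorProduct.sum_tmul, TensorProduct.tmul_sum, map_sum, LinearEquiv.coe_coe,
    TensorProduct.tensorTensorTensorComm_tmul, TensorProduct.map_tmul,
    TensorProduct.AlgebraTensorModule.tensorTensorTensorComm_tmul,
      LinearMap.mul'_apply, counit_antipode] at h
  rw [Finset.sum_comm] at h
  rw [smul_eq_mul, mul_comm (Coalgebra.counit (R := k) y)] at h
  refine Eq.trans ?_ h
  refine Finset.sum_congr rfl fun m _ => Finset.sum_congr rfl fun n _ => mul_comm _ _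

/-- The twisted product of `A_σ̄` as a linear map. -/
def mulMap : A ⊗[k] A →ₗ[k] A :=
  (TensorProduct.rid k A).toLinearMap ∘ₗ
    TensorProduct.map (LinearMap.mul' k A) σb ∘ₗ
      (TensorProduct.tensorTensorTensorComm k A A A A).toLinearMap ∘ₗ
        TensorProduct.map Δ Δ

/-- The twisted antipode `φ` as a linear map. -/
def phiMap : A →ₗ[k] A :=
  (TensorProduct.lid k A).toLinearMap ∘ₗ
    TensorProduct.map (σ ∘ₗ TensorProduct.map LinearMap.id S) S ∘ₗ
      TensorProduct.map Δ LinearMap.id ∘ₗ Δ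

lemma phiMap_repr {b : A} (w : Coalgebra.Repr k b (A × A)) (t : ∀ j, Coalgebra.Repr k (w.left j) (A × A)) :
    phiMap σ b = ∑ j ∈ w.index, ∑ m ∈ (t j).index,
        σ ((t j).left m ⊗ₜ[k] S ((t j).right m)) • S (w.right j) :=
  phi_repr σ w t

lemma mulMap_repr (x qq : A) (ux : Coalgebra.Repr k x (A × A)) (vq : Coalgebra.Repr k qq (A × A)) :
    mulMap σb (x ⊗ₜ[k] S qq)
    = ∑ p ∈ ux.index, ∑ n ∈ vq.index,
        σb (ux.right p ⊗ₜ[k] S (vq.left n)) • (ux.left p * S (vq.right n)) :=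
  mulsb_repr σb x qq ux vq

theorem main_aux
    (hconv₂ : LinearMap.mul' k k ∘ₗ TensorProduct.map σb σ ∘ₗ
        (Coalgebra.comul (R := k) (A := A ⊗[k] A)) =
      (Coalgebra.counit (R := k) (A := A ⊗[k] A))) :
    mulMap σb ∘ₗ TensorProduct.map LinearMap.id (phiMap σ) ∘ₗ Δ
      = Algebra.linearMap k A ∘ₗ Coalgebra.counit := by
  refine LinearMap.ext fun a => ?_
  have r := Coalgebra.Repr.arbitrary k a
  have u : ∀ i, Coalgebra.Repr k (r.left i) (A × A) := fun i => Coalgebra.Repr.arbitrary k _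
  have w : ∀ i, Coalgebra.Repr k (r.right i) (A × A) := fun i => Coalgebra.Repr.arbitrary k _
  have t : ∀ i j, Coalgebra.Repr k ((w i).left j) (A × A) := fun i j => Coalgebra.Repr.arbitrary k _
  have v : ∀ i j, Coalgebra.Repr k ((w i).right j) (A × A) := fun i j => Coalgebra.Repr.arbitrary k _
  have q : ∀ i j l, Coalgebra.Repr k ((v i j).left l) (A × A) := fun i j l =>
    Coalgebra.Repr.arbitrary k _
  calc (mulMap σb ∘ₗ TensorProduct.map LinearMap.id (phiMap σ) ∘ₗ Δ) a
      = ∑ i ∈ r.index, mulMap σb (r.left i ⊗ₜ[k] phiMap σ (r.right i)) := by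
        simp only [LinearMap.comp_apply]
        rw [← r.eq]
        simp only [map_sum, TensorProduct.map_tmul, LinearMap.id_apply]
    _ = ∑ i ∈ r.index, ∑ j ∈ (w i).index, ∑ m ∈ (t i j).index,
          σ ((t i j).left m ⊗ₜ[k] S ((t i j).right m)) •
            mulMap σb (r.left i ⊗ₜ[k] S ((w i).right j)) := by
        refine Finset.sum_congr rfl fun i _ => ?_
        rw [phiMap_repr σ (w i) (t i)]
        simp only [TensorProduct.tmul_sum, TensorProduct.tmul_smul, map_sum, map_smul]
    _ = ∑ i ∈ r.index, ∑ j ∈ (w i).index, ∑ m ∈ (t i j).index,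
          ∑ p ∈ (u i).index, ∑ n ∈ (v i j).index,
          (σ ((t i j).left m ⊗ₜ[k] S ((t i j).right m)) *
            σb ((u i).right p ⊗ₜ[k] S ((v i j).left n))) •
              ((u i).left p * S ((v i j).right n)) := by
        refine Finset.sum_congr rfl fun i _ => Finset.sum_congr rfl fun j _ =>
          Finset.sum_congr rfl fun m _ => ?_
        rw [mulMap_repr σb (r.left i) ((w i).right j) (u i) (v i j)]
        rw [Finset.smul_sum]
        refine Finset.sum_congr rfl fun p _ => ?_
        rw [Finset.smul_sum]
        refine Finset.sum_congr rfl fun n _ => ?_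
        rw [smul_smul]
    _ = ∑ i ∈ r.index, ∑ p ∈ (u i).index, ∑ j ∈ (w i).index, ∑ m ∈ (t i j).index,
          ∑ n ∈ (v i j).index,
          (σ ((t i j).left m ⊗ₜ[k] S ((t i j).right m)) *
            σb ((u i).right p ⊗ₜ[k] S ((v i j).left n))) •
              ((u i).left p * S ((v i j).right n)) := by
        refine Finset.sum_congr rfl fun i _ => ?_
        refine Eq.trans (Finset.sum_congr rfl fun j _ => Finset.sum_comm) Finset.sum_comm
    _ = theta6 σ σb (∑ i ∈ r.index, ∑ p ∈ (u i).index, ∑ j ∈ (w i).index,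
          ∑ m ∈ (t i j).index, ∑ n ∈ (v i j).index,
          (u i).left p ⊗ₜ[k] ((u i).right p ⊗ₜ[k]
            ((t i j).left m ⊗ₜ[k] ((t i j).right m ⊗ₜ[k]
              ((v i j).left n ⊗ₜ[k] (v i j).right n))))) := by
        simp only [map_sum, theta6_tmul]
    _ = theta6 σ σb (∑ i ∈ r.index, ∑ j ∈ (w i).index, ∑ m ∈ (t i j).index,
          ∑ l ∈ (v i j).index, ∑ n ∈ (q i j l).index,
          r.left i ⊗ₜ[k] ((t i j).left m ⊗ₜ[k] ((t i j).right m ⊗ₜ[k]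
            ((q i j l).left n ⊗ₜ[k] ((q i j l).right n ⊗ₜ[k] (v i j).right l))))) := by
        rw [P1_eq r u w t v, P2_eq r w t v q]
    _ = ∑ i ∈ r.index, ∑ j ∈ (w i).index, ∑ l ∈ (v i j).index, ∑ m ∈ (t i j).index,
          ∑ n ∈ (q i j l).index,
          (σ ((t i j).right m ⊗ₜ[k] S ((q i j l).left n)) *
            σb ((t i j).left m ⊗ₜ[k] S ((q i j l).right n))) •
              (r.left i * S ((v i j).right l)) := by
        simp only [map_sum, theta6_tmul]
        refine Finset.sum_congr rfl fun i _ => Finset.sum_congr rfl fun j _ =>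
          Finset.sum_comm
    _ = ∑ i ∈ r.index, ∑ j ∈ (w i).index, ∑ l ∈ (v i j).index,
          (Coalgebra.counit (R := k) ((w i).left j) *
            Coalgebra.counit (R := k) ((v i j).left l)) •
              (r.left i * S ((v i j).right l)) := by
        refine Finset.sum_congr rfl fun i _ => Finset.sum_congr rfl fun j _ =>
          Finset.sum_congr rfl fun l _ => ?_
        simp only [← Finset.sum_smul]
        rw [collapse σ σb hconv₂ ((w i).left j) ((v i j).left l) (t i j) (q i j l)]
    _ = ∑ i ∈ r.index, ∑ j ∈ (w i).index,
          Coalgebra.counit (R := k) ((w i).left j) • (r.left i * S ((w i).right j)) := by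
        refine Finset.sum_congr rfl fun i _ => Finset.sum_congr rfl fun j _ => ?_
        calc ∑ l ∈ (v i j).index,
              (Coalgebra.counit (R := k) ((w i).left j) *
                Coalgebra.counit (R := k) ((v i j).left l)) •
                  (r.left i * S ((v i j).right l))
            = Coalgebra.counit (R := k) ((w i).left j) •
                (r.left i * S (∑ l ∈ (v i j).index,
                  Coalgebra.counit (R := k) ((v i j).left l) • (v i j).right l)) := by
              rw [map_sum, Finset.mul_sum, Finset.smul_sum]
              refine Finset.sum_congr rfl fun l _ => ?_
              rw [mul_smul, map_smul, mul_smul_comm]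
          _ = Coalgebra.counit (R := k) ((w i).left j) •
                (r.left i * S ((w i).right j)) := by
              rw [counit_smul_left (v i j)]
    _ = ∑ i ∈ r.index, r.left i * S (r.right i) := by
        refine Finset.sum_congr rfl fun i _ => ?_
        calc ∑ j ∈ (w i).index,
              Coalgebra.counit (R := k) ((w i).left j) • (r.left i * S ((w i).right j))
            = r.left i * S (∑ j ∈ (w i).index,
                Coalgebra.counit (R := k) ((w i).left j) • (w i).right j) := by
              rw [map_sum, Finset.mul_sum]
              refine Finset.sum_congr rfl fun j _ => ?_
              rw [map_smul, mul_smul_comm]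
          _ = r.left i * S (r.right i) := by rw [counit_smul_left (w i)]
    _ = (Algebra.linearMap k A ∘ₗ Coalgebra.counit) a := by
        rw [HopfAlgebra.sum_mul_antipode_eq_algebraMap_counit r]
        simp

end MainAux




/-- Let `A` be a Hopf algebra over a field `k` and `σ : A ⊗ A → k` a 2-cocycle
with convolution inverse `σ̄`.  The linear map `φ(a) = σ(a₁, S(a₂)) S(a₃)`
satisfies `m_{A_σ̄} ∘ (1 ⊗ φ) ∘ Δ = u ∘ ε`, i.e. `a₁ ·σ̄ φ(a₂) = ε(a)1` for all
`a ∈ A`, where `·σ̄` is the twisted product of `A_σ̄`. -/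
theorem twisted_antipode_right_inverse
    (k : Type*) [Field k] (A : Type*) [Ring A] [HopfAlgebra k A]
    (σ σb : A ⊗[k] A →ₗ[k] k)
    -- σb is a convolution inverse of σ (in the dual algebra of the coalgebra A ⊗ A)
    (hconv₁ : LinearMap.mul' k k ∘ₗ TensorProduct.map σ σb ∘ₗ
        (Coalgebra.comul (R := k) (A := A ⊗[k] A)) =
      (Coalgebra.counit (R := k) (A := A ⊗[k] A)))
    (hconv₂ : LinearMap.mul' k k ∘ₗ TensorProduct.map σb σ ∘ₗ
        (Coalgebra.comul (R := k) (A := A ⊗[k] A)) =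
      (Coalgebra.counit (R := k) (A := A ⊗[k] A)))
    -- the 2-cocycle equation σ(a₁,b₁)σ(a₂b₂,c) = σ(b₁,c₁)σ(a,b₂c₂)
    (hcoc : LinearMap.mul' k k ∘ₗ
        TensorProduct.map σ (σ ∘ₗ TensorProduct.map (LinearMap.mul' k A) LinearMap.id) ∘ₗ
        (TensorProduct.assoc k (A ⊗[k] A) (A ⊗[k] A) A).toLinearMap ∘ₗ
        TensorProduct.map
          ((TensorProduct.tensorTensorTensorComm k A A A A).toLinearMap ∘ₗ
            TensorProduct.map (Coalgebra.comul (R := k) (A := A))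
              (Coalgebra.comul (R := k) (A := A)))
          LinearMap.id =
      LinearMap.mul' k k ∘ₗ
        TensorProduct.map LinearMap.id σ ∘ₗ
        (TensorProduct.leftComm k A k A).toLinearMap ∘ₗ
        TensorProduct.map LinearMap.id (TensorProduct.map σ (LinearMap.mul' k A)) ∘ₗ
        TensorProduct.map LinearMap.id
          ((TensorProduct.tensorTensorTensorComm k A A A A).toLinearMap ∘ₗ
            TensorProduct.map (Coalgebra.comul (R := k) (A := A))
              (Coalgebra.comul (R := k) (A := A))) ∘ₗ
        (TensorProduct.assoc k A A A).toLinearMap)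
    -- normalization: σ(a,1) = σ(1,a) = ε(a)
    (hnorm : ∀ a : A, σ (a ⊗ₜ[k] (1 : A)) = Coalgebra.counit (R := k) a ∧
      σ ((1 : A) ⊗ₜ[k] a) = Coalgebra.counit (R := k) a) :
    -- the twisted product  a ·σ̄ b = σ̄(a₂,b₂) a₁b₁  of A_σ̄, as a linear map
    let mulσb : A ⊗[k] A →ₗ[k] A :=
      (TensorProduct.rid k A).toLinearMap ∘ₗ
        TensorProduct.map (LinearMap.mul' k A) σb ∘ₗ
          (TensorProduct.tensorTensorTensorComm k A A A A).toLinearMap ∘ₗ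
            TensorProduct.map (Coalgebra.comul (R := k) (A := A))
              (Coalgebra.comul (R := k) (A := A))
    -- φ(a) = σ(a₁, S(a₂)) S(a₃)
    let S : A →ₗ[k] A := HopfAlgebra.antipode (R := k)
    let φ : A →ₗ[k] A :=
      (TensorProduct.lid k A).toLinearMap ∘ₗ
        TensorProduct.map (σ ∘ₗ TensorProduct.map LinearMap.id S) S ∘ₗ
          TensorProduct.map (Coalgebra.comul (R := k) (A := A)) LinearMap.id ∘ₗ
            (Coalgebra.comul (R := k) (A := A))
    mulσb ∘ₗ TensorProduct.map LinearMap.id φ ∘ₗ (Coalgebra.comul (R := k) (A := A)) =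
      Algebra.linearMap k A ∘ₗ (Coalgebra.counit (R := k) (A := A)) := by
  intro mulσb S φ
  exact main_aux σ σb hconv₂
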